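/- Let (g,J) be an 8-dimensional nilpotent Lie algebra with weakly non-nilpotent complex structure, and let t be the smallest integer for which the ascending J-compatible series satisfies {0} ≠ a_t(J) = a_{t+l}(J) ≠ g for all l ≥ 1. Then the quotient (g̃_t, J̃_t) = (g/a_t(J), induced structure) is a 6-dimensional nilpotent Lie algebra with strongly non-nilpotent complex structure; in particular dim a_t(J) = 2 and a_t(J) = a_1(J). -/

import Mathlib

noncomputable section

open Complex Module
open scoped TensorProduct

namespace Paper

/-- The ascending central series of a real Lie algebra. -/
def ascSeries (g : Type*) [LieRing g] [LieAlgebra ℝ g] : ℕ → Submodule ℝ g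
  | 0 => ⊥
  | k + 1 =>
    { carrier := {X : g | ∀ Y : g, ⁅X, Y⁆ ∈ ascSeries g k}
      add_mem' := fun ha hb Y => by
        rw [add_lie]; exact Submodule.add_mem _ (ha Y) (hb Y)
      zero_mem' := fun Y => by rw [zero_lie]; exact Submodule.zero_mem _
      smul_mem' := fun c x hx Y => by rw [smul_lie]; exact Submodule.smul_mem _ c (hx Y) }

/-- A Lie algebra is nilpotent when its ascending central series reaches the whole algebra. -/
def IsNilpotentLie (g : Type*) [LieRing g] [LieAlgebra ℝ g] : Prop :=
  ∃ s : ℕ, ascSeries g s = ⊤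

/-- A (integrable) complex structure on a real Lie algebra. -/
structure ComplexStructure (g : Type*) [LieRing g] [LieAlgebra ℝ g] where
  J : g →ₗ[ℝ] g
  j_sq : ∀ X : g, J (J X) = -X
  integrable : ∀ X Y : g, ⁅X, Y⁆ + J ⁅J X, Y⁆ + J ⁅X, J Y⁆ - ⁅J X, J Y⁆ = 0

namespace ComplexStructure

variable {g g' : Type*} [LieRing g] [LieAlgebra ℝ g] [LieRing g'] [LieAlgebra ℝ g']

/-- The ascending `J`-compatible series `a_k(J)`. -/
def aSeries (Jc : ComplexStructure g) : ℕ → Submodule ℝ g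
  | 0 => ⊥
  | k + 1 =>
    { carrier := {X : g | (∀ Y : g, ⁅X, Y⁆ ∈ aSeries Jc k) ∧ (∀ Y : g, ⁅Jc.J X, Y⁆ ∈ aSeries Jc k)}
      add_mem' := fun ha hb => by
        refine ⟨fun Y => ?_, fun Y => ?_⟩
        · rw [add_lie]; exact Submodule.add_mem _ (ha.1 Y) (hb.1 Y)
        · rw [map_add, add_lie]; exact Submodule.add_mem _ (ha.2 Y) (hb.2 Y)
      zero_mem' := by
        refine ⟨fun Y => ?_, fun Y => ?_⟩
        · rw [zero_lie]; exact Submodule.zero_mem _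
        · rw [map_zero, zero_lie]; exact Submodule.zero_mem _
      smul_mem' := fun c x hx => by
        refine ⟨fun Y => ?_, fun Y => ?_⟩
        · rw [smul_lie]; exact Submodule.smul_mem _ c (hx.1 Y)
        · rw [map_smul, smul_lie]; exact Submodule.smul_mem _ c (hx.2 Y) }

/-- Quasi-nilpotent complex structure: `a₁(J) ≠ 0`. -/
def IsQuasiNilpotent (Jc : ComplexStructure g) : Prop := Jc.aSeries 1 ≠ ⊥

/-- Strongly non-nilpotent complex structure: `a₁(J) = 0`. -/
def IsSnN (Jc : ComplexStructure g) : Prop := Jc.aSeries 1 = ⊥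

/-- Weakly non-nilpotent complex structure: `a₁(J) ≠ 0` and the ascending compatible series
stabilizes strictly below `g`. -/
def IsWnN (Jc : ComplexStructure g) : Prop :=
  Jc.aSeries 1 ≠ ⊥ ∧ ∃ t : ℕ, Jc.aSeries t ≠ ⊤ ∧ ∀ l : ℕ, 1 ≤ l → Jc.aSeries (t + l) = Jc.aSeries t

/-- Non-nilpotent complex structure: the ascending compatible series never reaches `g`. -/
def IsNonNilpotent (Jc : ComplexStructure g) : Prop := ∀ t : ℕ, Jc.aSeries t ≠ ⊤

/-- Equivalence of complex structures. -/
def Equiv (Jc : ComplexStructure g) (Jc' : ComplexStructure g') : Prop :=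
  ∃ f : g ≃ₗ⁅ℝ⁆ g', ∀ X : g, f (Jc.J X) = Jc'.J (f X)

end ComplexStructure



lemma even_finrank_of_sq_neg_one {V : Type*} [AddCommGroup V] [Module ℝ V]
    [FiniteDimensional ℝ V] (e : V →ₗ[ℝ] V) (he : ∀ x, e (e x) = -x) :
    Even (Module.finrank ℝ V) := by
  letI : SMul ℂ V := ⟨fun z v => z.re • v + z.im • e v⟩
  have hsmul : ∀ (z : ℂ) (v : V), z • v = z.re • v + z.im • e v := fun _ _ => rfl
  letI : Module ℂ V :=
    { one_smul := fun v => by simp [hsmul]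
      mul_smul := fun z w v => by
        simp only [hsmul, Complex.mul_re, Complex.mul_im, map_add, map_smul, he,
          smul_add, smul_smul, smul_neg, sub_smul, add_smul]
        module
      smul_zero := fun z => by simp [hsmul]
      smul_add := fun z v w => by simp [hsmul]; module
      add_smul := fun z w v => by
        simp only [hsmul, Complex.add_re, Complex.add_im, add_smul]; module
      zero_smul := fun v => by simp [hsmul] }
  haveI : IsScalarTower ℝ ℂ V := ⟨fun r z v => by
    simp only [hsmul, Complex.real_smul, Complex.mul_re, Complex.mul_im, Complex.ofReal_re,
      Complex.ofReal_im, smul_add, smul_smul]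
    module⟩
  haveI : FiniteDimensional ℂ V := Module.Finite.of_restrictScalars_finite ℝ ℂ V
  have h := Module.finrank_mul_finrank ℝ ℂ V
  rw [Complex.finrank_real_complex] at h
  exact ⟨finrank ℂ V, by omega⟩
open Module

lemma ascSeries_zero {g : Type*} [LieRing g] [LieAlgebra ℝ g] :
    ascSeries g 0 = ⊥ := rfl

lemma ascSeries_succ_mem {g : Type*} [LieRing g] [LieAlgebra ℝ g] {k : ℕ} {X : g} :
    X ∈ ascSeries g (k + 1) ↔ ∀ Y : g, ⁅X, Y⁆ ∈ ascSeries g k := Iff.rfl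

lemma ascSeries_one_mem {g : Type*} [LieRing g] [LieAlgebra ℝ g] {X : g} :
    X ∈ ascSeries g 1 ↔ ∀ Y : g, ⁅X, Y⁆ = 0 := by
  simp [ascSeries_succ_mem, ascSeries_zero, Submodule.mem_bot]

/-- the center of a nonzero nilpotent Lie algebra is nonzero -/
lemma center_ne_bot {g : Type*} [LieRing g] [LieAlgebra ℝ g] (hg : IsNilpotentLie g)
    (hnz : (⊤ : Submodule ℝ g) ≠ ⊥) : ascSeries g 1 ≠ ⊥ := by
  intro hb
  obtain ⟨s, hs⟩ := hg
  apply hnz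
  rw [← hs]
  have key : ∀ k : ℕ, ascSeries g k = ⊥ := by
    intro k
    induction k with
    | zero => rfl
    | succ k ih =>
      rw [eq_bot_iff]
      intro X hX
      have h1 : X ∈ ascSeries g 1 := ascSeries_one_mem.mpr (fun Y => by
        have h2 := (ascSeries_succ_mem.mp hX) Y
        rw [ih] at h2
        simpa using h2)
      rw [hb] at h1; exact h1
  exact key s

namespace ComplexStructure

variable {g : Type*} [LieRing g] [LieAlgebra ℝ g]

lemma aSeries_zero (Jc : ComplexStructure g) : Jc.aSeries 0 = ⊥ := rfl

lemma aSeries_succ_mem (Jc : ComplexStructure g) {k : ℕ} {X : g} :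
    X ∈ Jc.aSeries (k + 1) ↔
      (∀ Y : g, ⁅X, Y⁆ ∈ Jc.aSeries k) ∧ (∀ Y : g, ⁅Jc.J X, Y⁆ ∈ Jc.aSeries k) := Iff.rfl

lemma aSeries_mono_succ (Jc : ComplexStructure g) (k : ℕ) :
    Jc.aSeries k ≤ Jc.aSeries (k + 1) := by
  induction k with
  | zero => rw [Jc.aSeries_zero]; exact bot_le
  | succ k ih =>
    intro X hX
    rw [aSeries_succ_mem] at hX ⊢
    exact ⟨fun Y => ih (hX.1 Y), fun Y => ih (hX.2 Y)⟩

lemma aSeries_mono (Jc : ComplexStructure g) {k l : ℕ} (h : k ≤ l) :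
    Jc.aSeries k ≤ Jc.aSeries l := by
  induction l, h using Nat.le_induction with
  | base => exact le_rfl
  | succ l hl ih => exact le_trans ih (Jc.aSeries_mono_succ l)

lemma aSeries_J_mem (Jc : ComplexStructure g) {k : ℕ} {X : g} (hX : X ∈ Jc.aSeries k) :
    Jc.J X ∈ Jc.aSeries k := by
  induction k with
  | zero => rw [Jc.aSeries_zero] at hX ⊢; simp only [Submodule.mem_bot] at hX ⊢; simp [hX]
  | succ k ih =>
    rw [aSeries_succ_mem] at hX ⊢
    refine ⟨hX.2, fun Y => ?_⟩
    rw [Jc.j_sq, neg_lie]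
    exact Submodule.neg_mem _ (hX.1 Y)

end ComplexStructure
/-- In a nilpotent Lie algebra, `ad W` has no nonzero real eigenvector. -/
lemma no_real_eigen {g : Type*} [LieRing g] [LieAlgebra ℝ g] (hg : IsNilpotentLie g)
    (W V : g) (c : ℝ) (hc : c ≠ 0) (h : ⁅W, V⁆ = c • V) : V = 0 := by
  obtain ⟨s, hs⟩ := hg
  have key : ∀ k : ℕ, ∀ V : g, V ∈ ascSeries g k → ⁅W, V⁆ = c • V → V = 0 := by
    intro k
    induction k with
    | zero => intro V hV _; simpa [ascSeries_zero] using hV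
    | succ k ih =>
      intro V hV hWV
      have h1 : ⁅V, W⁆ ∈ ascSeries g k := (ascSeries_succ_mem.mp hV) W
      rw [← lie_skew, hWV, neg_mem_iff] at h1
      have h2 : ⁅W, c • V⁆ = c • (c • V) := by rw [lie_smul, hWV]
      have h3 := ih (c • V) h1 h2
      have : V = 0 := by
        have := smul_eq_zero.mp h3
        tauto
      exact this
  have := key s V (by rw [hs]; trivial) h
  exact this

/-- In a nilpotent Lie algebra, if `ad W` commutes with `J` then `ad W` has no nonzero
"complex eigenvector". -/
lemma no_complex_eigen {g : Type*} [LieRing g] [LieAlgebra ℝ g] (hg : IsNilpotentLie g)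
    (Jc : ComplexStructure g) (W V : g)
    (hcomm : ∀ Y : g, ⁅W, Jc.J Y⁆ = Jc.J ⁅W, Y⁆)
    (a b : ℝ) (hab : ¬ (a = 0 ∧ b = 0))
    (h : ⁅W, V⁆ = a • V + b • Jc.J V) : V = 0 := by
  obtain ⟨s, hs⟩ := hg
  have key : ∀ k : ℕ, ∀ V : g, V ∈ ascSeries g k → ⁅W, V⁆ = a • V + b • Jc.J V → V = 0 := by
    intro k
    induction k with
    | zero => intro V hV _; simpa [ascSeries_zero] using hV
    | succ k ih =>
      intro V hV hWV
      set V' : g := a • V + b • Jc.J V with hV'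
      have h1 : V' ∈ ascSeries g k := by
        have := (ascSeries_succ_mem.mp hV) W
        rw [← lie_skew, hWV, neg_mem_iff] at this
        exact this
      have h2 : ⁅W, V'⁆ = a • V' + b • Jc.J V' := by
        rw [hV', lie_add, lie_smul, lie_smul, hWV, hcomm, hWV]
      have h3 := ih V' h1 h2
      -- from a•V + b•J V = 0 deduce V = 0
      have h4 : (a ^ 2 + b ^ 2) • V = 0 := by
        have h5 : a • V' - b • Jc.J V' = (a ^ 2 + b ^ 2) • V := by
          rw [hV']
          simp only [map_add, map_smul, Jc.j_sq]
          module
        rw [h3] at h5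
        simpa using h5.symm
      have h6 : a ^ 2 + b ^ 2 ≠ 0 := by
        intro hz
        have ha : a = 0 := by nlinarith [sq_nonneg a, sq_nonneg b]
        have hb : b = 0 := by nlinarith [sq_nonneg a, sq_nonneg b]
        exact hab ⟨ha, hb⟩
      have := smul_eq_zero.mp h4
      tauto
  exact key s V (by rw [hs]; trivial) h
lemma finrank_pos_of_ne_bot {V : Type*} [AddCommGroup V] [Module ℝ V] [FiniteDimensional ℝ V]
    {p : Submodule ℝ V} (h : p ≠ ⊥) : 0 < Module.finrank ℝ p := by
  rw [Submodule.ne_bot_iff] at h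
  obtain ⟨x, hx, hx0⟩ := h
  exact Module.finrank_pos_iff_exists_ne_zero.mpr
    ⟨⟨x, hx⟩, fun h' => hx0 (by simpa using congrArg Subtype.val h')⟩

namespace ComplexStructure

variable {g : Type*} [LieRing g] [LieAlgebra ℝ g]

lemma pair_indep (Jc : ComplexStructure g) {X : g} (hX : X ≠ 0) :
    LinearIndependent ℝ ![X, Jc.J X] := by
  rw [LinearIndependent.pair_iff]
  intro s t hst
  have h2 : s • Jc.J X + t • (-X) = 0 := by
    have h1 := congrArg Jc.J hst
    simpa [map_add, map_smul, Jc.j_sq] using h1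
  have h4 : (s ^ 2 + t ^ 2) • X = s • (s • X + t • Jc.J X) - t • (s • Jc.J X + t • (-X)) := by
    module
  rw [hst, h2] at h4
  simp only [smul_zero, sub_zero] at h4
  have h5 : s ^ 2 + t ^ 2 = 0 := by
    rcases smul_eq_zero.mp h4 with h | h
    · exact h
    · exact absurd h hX
  constructor <;> nlinarith [sq_nonneg s, sq_nonneg t]

lemma finrank_span_pair (Jc : ComplexStructure g) {X : g} (hX : X ≠ 0) :
    Module.finrank ℝ (Submodule.span ℝ {X, Jc.J X}) = 2 := by
  have h := finrank_span_eq_card (Jc.pair_indep hX)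
  rw [show Set.range ![X, Jc.J X] = {X, Jc.J X} by simp [Set.pair_comm]] at h
  simpa using h

/-- No SnN complex structure on a 2-dimensional nilpotent Lie algebra. -/
lemma no_SnN_dim2 {g : Type*} [LieRing g] [LieAlgebra ℝ g]
    (h2 : Module.finrank ℝ g = 2) (hg : IsNilpotentLie g) (Jc : ComplexStructure g)
    (hs : Jc.aSeries 1 = ⊥) : False := by
  haveI : FiniteDimensional ℝ g := FiniteDimensional.of_finrank_pos (by omega)
  have hnz : (⊤ : Submodule ℝ g) ≠ ⊥ := by
    intro h
    rw [← finrank_top ℝ g, h, finrank_bot] at h2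
    omega
  obtain ⟨Z, hZmem, hZ0⟩ := (Submodule.ne_bot_iff _).mp (center_ne_bot hg hnz)
  have hZc : ∀ Y : g, ⁅Z, Y⁆ = 0 := ascSeries_one_mem.mp hZmem
  have hspan : Submodule.span ℝ {Z, Jc.J Z} = ⊤ :=
    Submodule.eq_top_of_finrank_eq (by rw [Jc.finrank_span_pair hZ0, h2])
  have hZa : Z ∈ Jc.aSeries 1 := by
    refine ⟨fun Y => ?_, fun Y => ?_⟩
    · rw [Jc.aSeries_zero]
      simp [hZc Y]
    · rw [Jc.aSeries_zero]
      obtain ⟨a, b, hab⟩ := Submodule.mem_span_pair.mp (hspan ▸ Submodule.mem_top (x := Y))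
      rw [← hab]
      have h1 : ⁅Jc.J Z, Z⁆ = 0 := by rw [← lie_skew, hZc]; simp
      simp [lie_add, lie_smul, h1]
  rw [hs] at hZa
  exact hZ0 (by simpa using hZa)

end ComplexStructure
namespace ComplexStructure

/-- No SnN complex structure on a 4-dimensional nilpotent Lie algebra. -/
lemma no_SnN_dim4 {g : Type*} [LieRing g] [LieAlgebra ℝ g]
    (h4 : Module.finrank ℝ g = 4) (hg : IsNilpotentLie g) (Jc : ComplexStructure g)
    (hs : Jc.aSeries 1 = ⊥) : False := by
  haveI : FiniteDimensional ℝ g := FiniteDimensional.of_finrank_pos (by omega)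
  set z : Submodule ℝ g := ascSeries g 1 with hz
  have hnz : (⊤ : Submodule ℝ g) ≠ ⊥ := by
    intro h
    rw [← finrank_top ℝ g, h, finrank_bot] at h4
    omega
  have hznb : z ≠ ⊥ := center_ne_bot hg hnz
  -- key consequence of SnN: no nonzero X with X, J X both central
  have hK : ∀ X : g, X ∈ z → Jc.J X ∈ z → X = 0 := by
    intro X h1 h2
    have hXa : X ∈ Jc.aSeries 1 := by
      refine ⟨fun Y => ?_, fun Y => ?_⟩
      · rw [Jc.aSeries_zero]; simp [(ascSeries_one_mem.mp h1) Y]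
      · rw [Jc.aSeries_zero]; simp [(ascSeries_one_mem.mp h2) Y]
    rw [hs] at hXa
    simpa using hXa
  -- J as a linear equivalence
  set e : g ≃ₗ[ℝ] g := LinearEquiv.ofLinear Jc.J (-Jc.J)
    (by ext x; simp [Jc.j_sq]) (by ext x; simp [Jc.j_sq]) with he
  set zJ : Submodule ℝ g := Submodule.comap Jc.J z with hzJ
  have hfrJ : Module.finrank ℝ zJ = Module.finrank ℝ z := by
    have h1 : zJ = Submodule.map (e.symm : g →ₗ[ℝ] g) z := by
      rw [← Submodule.comap_equiv_eq_map_symm]; rfl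
    rw [h1]
    exact LinearEquiv.finrank_map_eq e.symm z
  have hKbot : z ⊓ zJ = ⊥ := by
    rw [eq_bot_iff]
    intro X hX
    exact Submodule.mem_bot ℝ |>.mpr (hK X hX.1 hX.2)
  have hsup := Submodule.finrank_sup_add_finrank_inf_eq z zJ
  rw [hKbot, finrank_bot] at hsup
  have hfzpos : 0 < Module.finrank ℝ z := finrank_pos_of_ne_bot hznb
  have hfzle : Module.finrank ℝ z ≤ 4 := h4 ▸ Submodule.finrank_le z
  have hsuple : Module.finrank ℝ (z ⊔ zJ : Submodule ℝ g) ≤ 4 := h4 ▸ Submodule.finrank_le _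
  -- hence finrank z ≤ 2
  have hfz2 : Module.finrank ℝ z ≤ 2 := by omega
  rcases Nat.lt_or_ge (Module.finrank ℝ z) 2 with hcase | hcase
  · -- dim z = 1
    have hfz1 : Module.finrank ℝ z = 1 := by omega
    obtain ⟨Z, hZmem, hZ0⟩ := (Submodule.ne_bot_iff _).mp hznb
    have hZc : ∀ Y : g, ⁅Z, Y⁆ = 0 := ascSeries_one_mem.mp hZmem
    have hJZ : Jc.J Z ∉ z := fun h => hZ0 (hK Z hZmem h)
    set A : g →ₗ[ℝ] g := LieAlgebra.ad ℝ g (Jc.J Z) with hA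
    have hAapp : ∀ Y : g, A Y = ⁅Jc.J Z, Y⁆ := fun Y => rfl
    have hcomm : ∀ Y : g, ⁅Jc.J Z, Jc.J Y⁆ = Jc.J ⁅Jc.J Z, Y⁆ := by
      intro Y
      have hint := Jc.integrable Z Y
      rw [hZc Y, hZc (Jc.J Y)] at hint
      simp only [map_zero, zero_add, add_zero] at hint
      exact (sub_eq_zero.mp hint).symm
    have hJZ0 : Jc.J Z ≠ 0 := by
      intro h
      have h1 := congrArg Jc.J h
      rw [Jc.j_sq] at h1
      simp only [map_zero] at h1
      exact hZ0 (by simpa using h1)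
    have hAZ : A Z = 0 := by rw [hAapp, ← lie_skew, hZc]; simp
    have hAJZ : A (Jc.J Z) = 0 := by rw [hAapp]; exact lie_self _
    have hspanK : Submodule.span ℝ {Z, Jc.J Z} ≤ LinearMap.ker A := by
      rw [Submodule.span_le]
      intro x hx
      simp only [Set.mem_insert_iff, Set.mem_singleton_iff] at hx
      rcases hx with rfl | rfl
      · exact LinearMap.mem_ker.mpr hAZ
      · exact LinearMap.mem_ker.mpr hAJZ
    have hKfr : 2 ≤ Module.finrank ℝ (LinearMap.ker A) := by
      rw [← Jc.finrank_span_pair hZ0]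
      exact Submodule.finrank_mono hspanK
    have hrn := LinearMap.finrank_range_add_finrank_ker A
    rw [h4] at hrn
    have hRJ : ∀ v ∈ LinearMap.range A, Jc.J v ∈ LinearMap.range A := by
      rintro v ⟨Y, rfl⟩
      exact ⟨Jc.J Y, by rw [hAapp, hAapp, hcomm]⟩
    have hReven : Even (Module.finrank ℝ (LinearMap.range A)) := by
      apply even_finrank_of_sq_neg_one (Jc.J.restrict hRJ)
      intro x
      apply Subtype.ext
      simp [LinearMap.restrict_apply, Jc.j_sq]
    have hRne : LinearMap.range A ≠ ⊥ := by
      intro h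
      rw [LinearMap.range_eq_bot] at h
      apply hJZ
      refine ascSeries_one_mem.mpr fun Y => ?_
      have h1 : A Y = 0 := by rw [h]; rfl
      rw [hAapp] at h1
      exact h1
    have hRfrpos := finrank_pos_of_ne_bot hRne
    have hRfr : Module.finrank ℝ (LinearMap.range A) = 2 := by
      rcases hReven with ⟨n, hn⟩
      omega
    have hRK : LinearMap.range A ≤ LinearMap.ker A := by
      intro v hv
      rcases eq_or_ne v 0 with rfl | hv0
      · exact Submodule.zero_mem _
      · have hsv : Submodule.span ℝ {v, Jc.J v} ≤ LinearMap.range A := by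
          rw [Submodule.span_le]
          intro x hx
          simp only [Set.mem_insert_iff, Set.mem_singleton_iff] at hx
          rcases hx with rfl | rfl
          · exact hv
          · exact hRJ _ hv
        have hse : Submodule.span ℝ {v, Jc.J v} = LinearMap.range A :=
          Submodule.eq_of_le_of_finrank_le hsv
            (by rw [hRfr, Jc.finrank_span_pair hv0])
        have hAv : A v ∈ Submodule.span ℝ {v, Jc.J v} := by
          rw [hse]; exact ⟨v, rfl⟩
        obtain ⟨a, b, hab⟩ := Submodule.mem_span_pair.mp hAv
        by_cases h0 : a = 0 ∧ b = 0
        · rw [LinearMap.mem_ker, ← hab, h0.1, h0.2]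
          simp
        · exfalso
          refine hv0 (no_complex_eigen hg Jc (Jc.J Z) v (fun Y => hcomm Y) a b h0 ?_)
          rw [← hAapp, ← hab]
    have hReqK : LinearMap.range A = LinearMap.ker A :=
      Submodule.eq_of_le_of_finrank_le hRK (by omega)
    have hJZR : Jc.J Z ∈ LinearMap.range A := by
      rw [hReqK]
      exact LinearMap.mem_ker.mpr hAJZ
    obtain ⟨W, hW⟩ := hJZR
    have heig : ⁅W, Jc.J Z⁆ = (-1 : ℝ) • (Jc.J Z) := by
      have h1 : ⁅Jc.J Z, W⁆ = Jc.J Z := by rw [← hAapp, hW]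
      rw [← lie_skew, h1]
      simp
    exact hJZ0 (no_real_eigen hg W (Jc.J Z) (-1) (by norm_num) heig)
  · -- dim z = 2
    have hfz2' : Module.finrank ℝ z = 2 := by omega
    have hsupeq : z ⊔ zJ = ⊤ := Submodule.eq_top_of_finrank_eq (by omega)
    have habel : ∀ a b : g, ⁅a, b⁆ = 0 := by
      intro a b
      obtain ⟨u₁, hu₁, v₁, hv₁, hav⟩ := Submodule.mem_sup.mp (hsupeq ▸ Submodule.mem_top (x := a))
      obtain ⟨u₂, hu₂, v₂, hv₂, hbv⟩ := Submodule.mem_sup.mp (hsupeq ▸ Submodule.mem_top (x := b))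
      have hu₁c : ∀ Y : g, ⁅u₁, Y⁆ = 0 := ascSeries_one_mem.mp hu₁
      have hu₂c : ∀ Y : g, ⁅u₂, Y⁆ = 0 := ascSeries_one_mem.mp hu₂
      have hJv₁c : ∀ Y : g, ⁅Jc.J v₁, Y⁆ = 0 := ascSeries_one_mem.mp hv₁
      have hJv₂c : ∀ Y : g, ⁅Jc.J v₂, Y⁆ = 0 := ascSeries_one_mem.mp hv₂
      have hvv : ⁅v₁, v₂⁆ = 0 := by
        have hint := Jc.integrable (Jc.J v₁) (Jc.J v₂)
        rw [Jc.j_sq, Jc.j_sq] at hint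
        rw [hJv₁c (Jc.J v₂)] at hint
        have h1 : ⁅Jc.J v₁, -v₂⁆ = 0 := hJv₁c _
        rw [h1] at hint
        have h2 : ⁅(-v₁ : g), Jc.J v₂⁆ = 0 := by
          rw [neg_lie, ← lie_skew, hJv₂c]; simp
        rw [h2] at hint
        simp only [map_zero, add_zero, zero_add, zero_sub, neg_lie, lie_neg, neg_neg,
          zero_add] at hint
        exact neg_eq_zero.mp hint
      rw [← hav, ← hbv]
      have hvu : ⁅v₁, u₂⁆ = 0 := by rw [← lie_skew, hu₂c, neg_zero]
      simp [lie_add, add_lie, hu₁c, hu₂c, hvv, hvu]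
    have hztop : z = ⊤ := by
      rw [eq_top_iff]
      intro X _
      exact ascSeries_one_mem.mpr (habel X)
    rw [hztop, finrank_top] at hfz2'
    omega

end ComplexStructure
lemma quotient_nilpotent {g : Type*} [LieRing g] [LieAlgebra ℝ g]
    (hg : IsNilpotentLie g) (I : LieIdeal ℝ g) : IsNilpotentLie (g ⧸ I) := by
  obtain ⟨s, hs⟩ := hg
  refine ⟨s, ?_⟩
  have key : ∀ k : ℕ, ∀ X : g, X ∈ ascSeries g k →
      LieSubmodule.Quotient.mk (N := I) X ∈ ascSeries (g ⧸ I) k := by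
    intro k
    induction k with
    | zero =>
      intro X hX
      rw [ascSeries_zero] at hX ⊢
      rw [Submodule.mem_bot] at hX ⊢
      rw [hX]
      exact (LieSubmodule.Quotient.mk_eq_zero I).mpr (Submodule.zero_mem _)
    | succ k ih =>
      intro X hX
      rw [ascSeries_succ_mem]
      intro Ybar
      obtain ⟨Y, rfl⟩ := Quot.exists_rep Ybar
      exact ih ⁅X, Y⁆ (ascSeries_succ_mem.mp hX Y)
  rw [eq_top_iff]
  intro q _
  obtain ⟨X, rfl⟩ := Quot.exists_rep q
  exact key s X (by rw [hs]; trivial)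

/-- Lemma 2.6: for a WnN complex structure on an 8-dimensional NLA, the quotient by the
stabilized term of the ascending compatible series is a 6-dimensional NLA with SnN complex
structure; in particular `dim a_t(J) = 2` and `a_t(J) = a₁(J)`. -/
theorem WnN_quotient_is_6dim_SnN
    {g : Type*} [LieRing g] [LieAlgebra ℝ g]
    (h8 : Module.finrank ℝ g = 8) (hg : IsNilpotentLie g)
    (Jc : ComplexStructure g) (hw : Jc.IsWnN)
    (t : ℕ)
    (ht : Jc.aSeries t ≠ ⊥ ∧ Jc.aSeries t ≠ ⊤ ∧
      ∀ l : ℕ, 1 ≤ l → Jc.aSeries (t + l) = Jc.aSeries t)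
    (htmin : ∀ s : ℕ, (Jc.aSeries s ≠ ⊥ ∧ Jc.aSeries s ≠ ⊤ ∧
      ∀ l : ℕ, 1 ≤ l → Jc.aSeries (s + l) = Jc.aSeries s) → t ≤ s)
    (I : LieIdeal ℝ g) (hI : I.toSubmodule = Jc.aSeries t)
    (Jt : ComplexStructure (g ⧸ I))
    (hJt : ∀ X : g, Jt.J (LieSubmodule.Quotient.mk (N := I) X)
      = LieSubmodule.Quotient.mk (N := I) (Jc.J X)) :
    Module.finrank ℝ (g ⧸ I) = 6 ∧ IsNilpotentLie (g ⧸ I) ∧ Jt.IsSnN ∧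
      Module.finrank ℝ (Jc.aSeries t) = 2 ∧ Jc.aSeries t = Jc.aSeries 1 := by
  haveI : FiniteDimensional ℝ g := FiniteDimensional.of_finrank_pos (by omega)
  haveI : FiniteDimensional ℝ (g ⧸ I) :=
    inferInstanceAs (FiniteDimensional ℝ (g ⧸ I.toSubmodule))
  obtain ⟨hbot, htop, hstab⟩ := ht
  have hfr : Module.finrank ℝ (g ⧸ I) + Module.finrank ℝ (Jc.aSeries t) = 8 := by
    have h0 := Submodule.finrank_quotient_add_finrank I.toSubmodule
    rw [h8] at h0
    rw [← hI]
    exact h0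
  have hnilq : IsNilpotentLie (g ⧸ I) := quotient_nilpotent hg I
  -- the induced structure is SnN
  have hSnN : Jt.aSeries 1 = ⊥ := by
    rw [eq_bot_iff]
    intro q hq
    obtain ⟨X, rfl⟩ := Quot.exists_rep q
    have hq1 : ∀ Ybar : g ⧸ I, ⁅LieSubmodule.Quotient.mk (N := I) X, Ybar⁆ ∈ Jt.aSeries 0 :=
      (Jt.aSeries_succ_mem.mp hq).1
    have hq2 : ∀ Ybar : g ⧸ I, ⁅Jt.J (LieSubmodule.Quotient.mk (N := I) X), Ybar⁆
        ∈ Jt.aSeries 0 := (Jt.aSeries_succ_mem.mp hq).2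
    have hX : X ∈ Jc.aSeries (t + 1) := by
      refine ⟨fun Y => ?_, fun Y => ?_⟩
      · have h1 := hq1 (LieSubmodule.Quotient.mk (N := I) Y)
        rw [Jt.aSeries_zero, Submodule.mem_bot] at h1
        have h2 : LieSubmodule.Quotient.mk (N := I) ⁅X, Y⁆ = 0 := h1
        have h3 : ⁅X, Y⁆ ∈ I := (LieSubmodule.Quotient.mk_eq_zero I).mp h2
        rw [← hI]
        exact h3
      · have h1 := hq2 (LieSubmodule.Quotient.mk (N := I) Y)
        rw [hJt, Jt.aSeries_zero, Submodule.mem_bot] at h1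
        have h2 : LieSubmodule.Quotient.mk (N := I) ⁅Jc.J X, Y⁆ = 0 := h1
        have h3 : ⁅Jc.J X, Y⁆ ∈ I := (LieSubmodule.Quotient.mk_eq_zero I).mp h2
        rw [← hI]
        exact h3
    rw [hstab 1 le_rfl, ← hI] at hX
    refine (Submodule.mem_bot ℝ).mpr ?_
    exact (LieSubmodule.Quotient.mk_eq_zero I).mpr hX
  -- parity and dimension count
  have hevenq : Even (Module.finrank ℝ (g ⧸ I)) :=
    even_finrank_of_sq_neg_one Jt.J Jt.j_sq
  have hevent : Even (Module.finrank ℝ (Jc.aSeries t)) := by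
    apply even_finrank_of_sq_neg_one
      (Jc.J.restrict (p := Jc.aSeries t) (q := Jc.aSeries t) (fun x hx => Jc.aSeries_J_mem hx))
    intro x
    exact Subtype.ext (by simp [LinearMap.restrict_apply, Jc.j_sq])
  have hatpos : 0 < Module.finrank ℝ (Jc.aSeries t) := finrank_pos_of_ne_bot hbot
  have hatne8 : Module.finrank ℝ (Jc.aSeries t) ≠ 8 := by
    intro h
    exact htop (Submodule.eq_top_of_finrank_eq (by rw [h, h8]))
  have hqne2 : Module.finrank ℝ (g ⧸ I) ≠ 2 := fun h => ComplexStructure.no_SnN_dim2 h hnilq Jt hSnN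
  have hqne4 : Module.finrank ℝ (g ⧸ I) ≠ 4 := fun h => ComplexStructure.no_SnN_dim4 h hnilq Jt hSnN
  obtain ⟨m, hm⟩ := hevenq
  obtain ⟨n, hn⟩ := hevent
  have hq6 : Module.finrank ℝ (g ⧸ I) = 6 := by omega
  have hat2 : Module.finrank ℝ (Jc.aSeries t) = 2 := by omega
  -- a_t = a_1
  have ht1 : 1 ≤ t := by
    rcases Nat.eq_zero_or_pos t with h | h
    · subst h
      exact absurd (Jc.aSeries_zero) hbot
    · exact h
  have hle : Jc.aSeries 1 ≤ Jc.aSeries t := Jc.aSeries_mono ht1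
  have heven1 : Even (Module.finrank ℝ (Jc.aSeries 1)) := by
    apply even_finrank_of_sq_neg_one
      (Jc.J.restrict (p := Jc.aSeries 1) (q := Jc.aSeries 1) (fun x hx => Jc.aSeries_J_mem hx))
    intro x
    exact Subtype.ext (by simp [LinearMap.restrict_apply, Jc.j_sq])
  have h1pos : 0 < Module.finrank ℝ (Jc.aSeries 1) := finrank_pos_of_ne_bot hw.1
  obtain ⟨p, hp⟩ := heven1
  have heq : Jc.aSeries 1 = Jc.aSeries t :=
    Submodule.eq_of_le_of_finrank_le hle (by omega)
  exact ⟨hq6, hnilq, hSnN, hat2, heq.symm⟩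
end Paper
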